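/- arXiv:2102.06055 — 2 statements merged into one kernel-verified Lean document; each statement's English description precedes it below -/
import Mathlib

section
/- Let (ϖ_k)_{k≥1} and (ϖ'_k)_{k≥1} be non-increasing sequences of integers such that for every α ∈ ℤ the sets {k : ϖ_k ≥ α} and {k : ϖ'_k ≥ α} are finite. If Σ_{k : ϖ_k ≥ α} (ϖ_k − α) ≤ Σ_{k : ϖ'_k ≥ α} (ϖ'_k − α) for every α ∈ ℤ, then Σ_{k=1}^i ϖ_k ≤ Σ_{k=1}^i ϖ'_k for every i ≥ 1. -/
open scoped Classical

noncomputable section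

/-- A partition: an antitone, eventually zero sequence of natural numbers.
`parts k` is the `(k+1)`-st part `λ_{k+1}`. -/
structure Partition' where
  parts : ℕ → ℕ
  antitone' : Antitone parts
  exists_zero : ∃ N, parts N = 0

namespace Partition'

lemma sorted_getD_antitone {l : List ℕ} (h : l.Pairwise (· ≥ ·)) :
    Antitone (fun k => l.getD k 0) := by
  intro i j hij
  simp only
  rcases lt_or_ge j l.length with hj | hj
  · have hi : i < l.length := lt_of_le_of_lt hij hj
    rw [List.getD_eq_getElem l 0 hj, List.getD_eq_getElem l 0 hi]
    rcases eq_or_lt_of_le hij with rfl | hlt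
    · exact le_rfl
    · exact List.pairwise_iff_getElem.mp h i j hi hj hlt
  · rw [List.getD_eq_default l 0 hj]
    exact Nat.zero_le _

/-- The partition whose multiset of (nonzero) parts is the multiset of nonzero
elements of `m`. -/
def ofMul (m : Multiset ℕ) : Partition' where
  parts := fun k => ((m.sort (· ≤ ·)).reverse).getD k 0
  antitone' := by
    apply sorted_getD_antitone
    rw [List.pairwise_reverse]
    exact Multiset.pairwise_sort (r := (· ≤ ·)) (s := m)
  exists_zero := ⟨((m.sort (· ≤ ·)).reverse).length, List.getD_eq_default _ _ le_rfl⟩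

/-- The size `|λ|` of a partition: the sum of its parts. -/
def size (p : Partition') : ℕ := ∑ i ∈ Finset.range (Nat.find p.exists_zero), p.parts i

lemma finite_gt (p : Partition') (k : ℕ) : {i : ℕ | k < p.parts i}.Finite := by
  obtain ⟨N, hN⟩ := p.exists_zero
  apply (Set.finite_Iio N).subset
  intro i hi
  simp only [Set.mem_setOf_eq] at hi
  by_contra hc
  simp only [Set.mem_Iio, not_lt] at hc
  have := p.antitone' hc
  omega

/-- The conjugate (transpose) partition. -/
def conj (p : Partition') : Partition' where
  parts := fun k => {i : ℕ | k < p.parts i}.ncard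
  antitone' := fun a b hab =>
    Set.ncard_le_ncard (fun i hi => lt_of_le_of_lt hab hi) (p.finite_gt a)
  exists_zero := by
    refine ⟨p.parts 0, ?_⟩
    have h : {i : ℕ | p.parts 0 < p.parts i} = ∅ := by
      ext i
      simp only [Set.mem_setOf_eq, Set.mem_empty_iff_false, iff_false, not_lt]
      exact p.antitone' (Nat.zero_le i)
    show {i : ℕ | p.parts 0 < p.parts i}.ncard = 0
    rw [h, Set.ncard_empty]

/-- The 180°-rotation of the complement of `p` inside the rectangle with
`rows` rows of length `c`: the partition `(c - p_rows, c - p_{rows-1}, …, c - p₁)`. -/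
def rotCompl (c rows : ℕ) (p : Partition') : Partition' where
  parts := fun k => if k < rows then c - p.parts (rows - 1 - k) else 0
  antitone' := by
    intro a b hab
    by_cases hb : b < rows
    · have ha : a < rows := lt_of_le_of_lt hab hb
      simp only [if_pos hb, if_pos ha]
      exact Nat.sub_le_sub_left (p.antitone' (by omega)) c
    · simp only [if_neg hb]
      exact Nat.zero_le _
  exists_zero := ⟨rows, by simp⟩

end Partition'

/-- A bipartition: a pair of partitions. -/
abbrev Bipartition := Partition' × Partition'

/-- The size of a bipartition. -/
def Bipartition.size (l : Bipartition) : ℕ := l.1.size + l.2.size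

/-- The bipartition whose components have parts the multisets `a` and `b`. -/
def bip (a b : Multiset ℕ) : Bipartition := (Partition'.ofMul a, Partition'.ofMul b)

/-- The multiset of parts of the partition `a 1^b` (one part `a`, then `b` parts `1`). -/
def hook (a b : ℕ) : Multiset ℕ := a ::ₘ Multiset.replicate b 1

/-- The charged β-set of a partition, as a sequence:
`betaSet p s i = λ_{i+1} + s - (i+1) + 1`. -/
def betaSet (p : Partition') (s : ℤ) (i : ℕ) : ℤ := (p.parts i : ℤ) + s - i

/-- The charged symbol of a bipartition with charge `σ`, as a pair of subsets of `ℤ`. -/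
def symbolOf (l : Bipartition) (σ : ℤ × ℤ) : Set ℤ × Set ℤ :=
  (Set.range (betaSet l.1 σ.1), Set.range (betaSet l.2 σ.2))

/-- The charge `σ_t`. -/
def sigmaT (t : ℕ) : ℤ × ℤ :=
  if Even t then ((t : ℤ), -1 - (t : ℤ)) else (-1 - (t : ℤ), (t : ℤ))

/-- The trivial symbol `({0,-1,-2,…},{-1,-2,-3,…})`, the symbol of the empty
bipartition with charge `σ₀ = (0,-1)`. -/
def trivialSymbol : Set ℤ × Set ℤ := ({z : ℤ | z ≤ 0}, {z : ℤ | z ≤ -1})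

/-- Removing one `n`-co-hook from the symbol `Λ`, yielding `Λ'`: remove `x+n` from one
row, adjoin `x` to the other row, and exchange the two rows. -/
def CohookStep (n : ℕ) (Λ Λ' : Set ℤ × Set ℤ) : Prop :=
  (∃ x : ℤ, x + n ∈ Λ.1 ∧ x ∉ Λ.2 ∧ Λ' = (Λ.2 ∪ {x}, Λ.1 \ {x + n})) ∨
  (∃ x : ℤ, x + n ∈ Λ.2 ∧ x ∉ Λ.1 ∧ Λ' = (Λ.2 \ {x + n}, Λ.1 ∪ {x}))

/-- `C` is the `n`-co-core of `Λ`: it is obtained from `Λ` by recursively removing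
`n`-co-hooks, and no further `n`-co-hook can be removed. -/
def IsCocore (n : ℕ) (Λ C : Set ℤ × Set ℤ) : Prop :=
  Relation.ReflTransGen (CohookStep n) Λ C ∧ ∀ C', ¬ CohookStep n C C'

/-- Number of entries of the charged β-set of `p` that are `≥ α` (with multiplicity). -/
def betaCountGE (p : Partition') (s α : ℤ) : ℕ := Nat.card {i : ℕ // α ≤ betaSet p s i}

/-- Number of entries `≥ α`, with multiplicity, of the multiset union of the two rows
of the symbol of `l` with charge `σ`. -/
def symCountGE (l : Bipartition) (σ : ℤ × ℤ) (α : ℤ) : ℕ :=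
  betaCountGE l.1 σ.1 α + betaCountGE l.2 σ.2 α

/-- The composition `ϖ_Λ` of the symbol of `l` with charge `σ`: `comp l σ k` is the
`(k+1)`-st largest entry (with multiplicity) of the multiset union of the two rows. -/
def comp (l : Bipartition) (σ : ℤ × ℤ) (k : ℕ) : ℤ :=
  sSup {z : ℤ | k + 1 ≤ symCountGE l σ z}

/-- All partial sums of the composition of the symbol `(l,σ)` are bounded by those of
`(m,τ)`. -/
def DomLE (l : Bipartition) (σ : ℤ × ℤ) (m : Bipartition) (τ : ℤ × ℤ) : Prop :=
  ∀ j : ℕ, ∑ k ∈ Finset.range j, comp l σ k ≤ ∑ k ∈ Finset.range j, comp m τ k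

/-- Strict dominance `Λ ⊲ Λ'` of symbols: the compositions differ and all partial sums
of the first are bounded by those of the second. -/
def DomLT (l : Bipartition) (σ : ℤ × ℤ) (m : Bipartition) (τ : ℤ × ℤ) : Prop :=
  comp l σ ≠ comp m τ ∧ DomLE l σ m τ

/-- A box `(x, y, j)` (0-indexed row `x`, 0-indexed column `y`, component `j`:
`j = 0` is the first component, `j = 1` the second). -/
abbrev Box := ℕ × ℕ × Fin 2

/-- The component of a bipartition selected by `j : Fin 2`. -/
def Bipartition.partsOf (l : Bipartition) (j : Fin 2) : Partition' := if j = 0 then l.1 else l.2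

/-- Membership of a box in the Young diagram of a bipartition. -/
def MemY (l : Bipartition) (b : Box) : Prop := b.2.1 < (l.partsOf b.2.2).parts b.1

/-- The entry of the charge `σ` corresponding to component `j`. -/
def chargeOf (σ : ℤ × ℤ) (j : Fin 2) : ℤ := if j = 0 then σ.1 else σ.2

/-- The charged content `co^σ(b) = y - x + σ_j` of a box. -/
def content (σ : ℤ × ℤ) (b : Box) : ℤ := (b.2.1 : ℤ) - (b.1 : ℤ) + chargeOf σ b.2.2

/-- `j(b) ∈ {1,2}`: the component of a box, numbered 1 or 2. -/
def jval (b : Box) : ℕ := (b.2.2 : ℕ) + 1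

/-- The counting function of the Dunkl–Griffeth order. -/
def dgCount (l : Bipartition) (s : ℤ × ℤ) (d : ℕ) (α : ℝ) (j : ℕ) : ℕ :=
  Nat.card {b : Box // MemY l b ∧
    (α < (content s b : ℝ) - (jval b : ℝ) * (d : ℝ) / 2 ∨
      ((content s b : ℝ) - (jval b : ℝ) * (d : ℝ) / 2 = α ∧ jval b ≤ j))}

/-- The Dunkl–Griffeth order `λ ⪯_s μ` (with respect to `d`). -/
def DGLE (l m : Bipartition) (s : ℤ × ℤ) (d : ℕ) : Prop :=
  ∀ (α : ℝ), ∀ j ∈ ({1, 2} : Set ℕ), dgCount l s d α j ≤ dgCount m s d α j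

/-- A box of the extended Young diagram: rows are infinite to the left, so the column
coordinate is an integer.  `(x, y, j)` is the box in (0-indexed) row `x`, with integer
column coordinate `y` (`y = 0` is the first column), in component `j`. -/
abbrev ExtBox := ℕ × ℤ × Fin 2

/-- Membership in the extended Young diagram of a bipartition. -/
def MemExtY (l : Bipartition) (b : ExtBox) : Prop :=
  b.2.1 < ((l.partsOf b.2.2).parts b.1 : ℤ)

/-- The charged content of an extended box. -/
def contentExt (σ : ℤ × ℤ) (b : ExtBox) : ℤ := b.2.1 - (b.1 : ℤ) + chargeOf σ b.2.2

/-- `b` is a removable box of the bipartition `l`. -/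
def Removable (l : Bipartition) (b : Box) : Prop :=
  (l.partsOf b.2.2).parts b.1 = b.2.1 + 1 ∧ (l.partsOf b.2.2).parts (b.1 + 1) ≤ b.2.1

/-- `b` is an addable box of the bipartition `l`. -/
def Addable (l : Bipartition) (b : Box) : Prop :=
  (l.partsOf b.2.2).parts b.1 = b.2.1 ∧
    (b.1 = 0 ∨ b.2.1 + 1 ≤ (l.partsOf b.2.2).parts (b.1 - 1))

/-- The order in which boxes are listed in the `i`-word: increasing charged content,
a component-2 box preceding a component-1 box of equal charged content. -/
def BoxLT (σ : ℤ × ℤ) (b b' : Box) : Prop :=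
  content σ b < content σ b' ∨
    (content σ b = content σ b' ∧ b.2.2 = 1 ∧ b'.2.2 = 0)

/-- `L` is the list of boxes underlying the `i`-word of `(l, σ)` with respect to `d`:
it lists, in increasing order, exactly the addable and removable boxes of `l` whose
charged content is congruent to `i` modulo `d`. -/
def IsIWord (l : Bipartition) (σ : ℤ × ℤ) (d : ℕ) (i : ZMod d) (L : List Box) : Prop :=
  L.Pairwise (BoxLT σ) ∧
    ∀ b : Box, b ∈ L ↔ ((Addable l b ∨ Removable l b) ∧ ((content σ b : ZMod d) = i))

/-- The sign of a box in the `i`-word: `true` (`+`) for addable, `false` (`−`) for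
removable boxes. -/
def signOf (l : Bipartition) (b : Box) : Bool := if Addable l b then true else false

/-- One reduction step on words: delete an adjacent pair `−+`. -/
def RedStep (w w' : List Bool) : Prop :=
  ∃ u v : List Bool, w = u ++ false :: true :: v ∧ w' = u ++ v

/-- `ẽ_i l = 0`: the reduced `i`-word of `(l, σ)` contains no `−`, i.e. the `i`-word
reduces to a word consisting only of `+`'s. -/
def AnnihilatedE (l : Bipartition) (σ : ℤ × ℤ) (d : ℕ) (i : ZMod d) : Prop :=
  ∃ L : List Box, IsIWord l σ d i L ∧
    ∃ a : ℕ, Relation.ReflTransGen RedStep (L.map (signOf l)) (List.replicate a true)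

/-- `q` is obtained from the partition `p` by adding one box. -/
def PCovers (p q : Partition') : Prop :=
  ∃ x : ℕ, q.parts x = p.parts x + 1 ∧ ∀ y : ℕ, y ≠ x → q.parts y = p.parts y

/-- `m` is obtained from the bipartition `l` by adding one box to its Young diagram. -/
def BipCovers (l m : Bipartition) : Prop :=
  (PCovers l.1 m.1 ∧ m.2 = l.2) ∨ (m.1 = l.1 ∧ PCovers l.2 m.2)

/-- `A(l) = Σ_μ μ`, the sum over all bipartitions obtained from `l` by adding one box,
as an element of the group of `ℤ`-valued functions on bipartitions. -/
def addB (l : Bipartition) : Bipartition → ℤ := fun m => if BipCovers l m then 1 else 0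

/-- The projection `π_S` onto the span of the bipartitions lying in `S`. -/
def projS (S : Set Bipartition) (f : Bipartition → ℤ) : Bipartition → ℤ :=
  fun m => if m ∈ S then f m else 0

/-- The basis element of `ℤ[BP]` corresponding to a bipartition. -/
def deltaB (l : Bipartition) : Bipartition → ℤ := fun m => if m = l then 1 else 0

/-- The bipartitions of `2n` labelling the principal-series unipotent characters in
the principal `Φ_{2n}`-block. -/
def PS (n : ℕ) : Set Bipartition :=
  {l | (∃ i j : ℕ, 0 < i ∧ i < n ∧ j ≤ n ∧
          l = bip (hook (n - i) j) (hook (n - j + 1) (i - 1))) ∨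
       (∃ j : ℕ, j < 2 * n ∧ l = bip (hook (2 * n - j) j) 0) ∨
       (∃ i : ℕ, 0 < i ∧ i ≤ 2 * n ∧ l = bip 0 (hook (2 * n - i + 1) (i - 1)))}

/-- The bipartitions of `2n-2` labelling the `B₂`-series unipotent characters in the
principal `Φ_{2n}`-block: `2^i 1^{j-i-1} . (n-i-1)(n-j)` for `0 ≤ i < j ≤ n`. -/
def LB2 (n : ℕ) : Set Bipartition :=
  {l | ∃ i j : ℕ, i < j ∧ j ≤ n ∧
        l = bip (Multiset.replicate i 2 + Multiset.replicate (j - i - 1) 1)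
                {n - i - 1, n - j}}

/-- The bipartitions of `2n-6` labelling the `B₆`-series unipotent characters in the
principal `Φ_{2n}`-block: `(n-i-2)(n-j-1) . 2^{i-1} 1^{j-i-1}` for `0 < i < j < n`. -/
def LB6 (n : ℕ) : Set Bipartition :=
  {l | ∃ i j : ℕ, 0 < i ∧ i < j ∧ j < n ∧
        l = bip {n - i - 2, n - j - 1}
                (Multiset.replicate (i - 1) 2 + Multiset.replicate (j - i - 1) 1)}

end

/-- If two non-increasing integer sequences with finite upper level
sets satisfy `Σ_{ϖ_k ≥ α} (ϖ_k - α) ≤ Σ_{ϖ'_k ≥ α} (ϖ'_k - α)` for all `α ∈ ℤ`, then all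
partial sums of the first are bounded by those of the second. -/
theorem decomposition_numbers_stmt2 (f g : ℕ → ℤ) (hf : Antitone f) (hg : Antitone g)
    (hff : ∀ α : ℤ, {k : ℕ | α ≤ f k}.Finite) (hgf : ∀ α : ℤ, {k : ℕ | α ≤ g k}.Finite)
    (h : ∀ α : ℤ, ∑ k ∈ (hff α).toFinset, (f k - α) ≤ ∑ k ∈ (hgf α).toFinset, (g k - α)) :
    ∀ i : ℕ, 1 ≤ i → ∑ k ∈ Finset.range i, f k ≤ ∑ k ∈ Finset.range i, g k := by
  intro i hi
  set α := g (i - 1) with hα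
  have key := h α
  have hsub : Finset.range i ⊆ (hgf α).toFinset := by
    intro k hk
    simp only [Finset.mem_range] at hk
    simp only [Set.Finite.mem_toFinset, Set.mem_setOf_eq]
    exact hg (by omega)
  have hgeq : ∑ k ∈ (hgf α).toFinset, (g k - α) = ∑ k ∈ Finset.range i, (g k - α) := by
    refine (Finset.sum_subset hsub ?_).symm
    intro k hk hnk
    simp only [Set.Finite.mem_toFinset, Set.mem_setOf_eq] at hk
    simp only [Finset.mem_range, not_lt] at hnk
    have : g k ≤ α := hg (by omega)
    omega
  have hfle : ∑ k ∈ Finset.range i, (f k - α) ≤ ∑ k ∈ (hff α).toFinset, (f k - α) := by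
    have h1 : ∑ k ∈ Finset.range i, (f k - α) ≤
        ∑ k ∈ (Finset.range i).filter (fun k => α ≤ f k), (f k - α) := by
      rw [← Finset.sum_filter_add_sum_filter_not (Finset.range i) (fun k => α ≤ f k)]
      have h2 : ∑ k ∈ (Finset.range i).filter (fun k => ¬ α ≤ f k), (f k - α) ≤ 0 := by
        apply Finset.sum_nonpos
        intro k hk
        simp only [Finset.mem_filter, not_le] at hk
        omega
      omega
    refine h1.trans (Finset.sum_le_sum_of_subset_of_nonneg ?_ ?_)
    · intro k hk
      simp only [Finset.mem_filter] at hk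
      simp only [Set.Finite.mem_toFinset, Set.mem_setOf_eq]
      exact hk.2
    · intro k hk _
      simp only [Set.Finite.mem_toFinset, Set.mem_setOf_eq] at hk
      omega
  have hfin := hfle.trans (key.trans_eq hgeq)
  simp only [Finset.sum_sub_distrib] at hfin
  omega
end

section
/- Let n ≥ 3. A bipartition λ of 2n−6 has the property that its symbol of charge σ₂ = (2,−3) has n-co-core equal to the trivial symbol if and only if λ = (n−i−2)(n−j−1).2^{i−1}1^{j−i−1} for some 0 < i < j < n. There are exactly (n−1)(n−2)/2 such bipartitions. -/
open scoped Classical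

namespace DN6
open Set

def Lo (r : ℤ) : Set ℤ := {z : ℤ | z ≤ r}

@[simp] lemma mem_Lo {r z : ℤ} : z ∈ Lo r ↔ z ≤ r := Iff.rfl

lemma Partition'.ext' {p q : Partition'} (h : p.parts = q.parts) : p = q := by
  cases p; cases q; simpa using h

lemma sort_eq_of_sorted {m : Multiset ℕ} {l : List ℕ} (h : (l : Multiset ℕ) = m)
    (hs : l.Pairwise (· ≤ ·)) : m.sort (· ≤ ·) = l := by
  apply List.Perm.eq_of_pairwise' (Multiset.pairwise_sort _ _) hs (Multiset.coe_eq_coe.mp ?_)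
  rw [Multiset.sort_eq, h]

lemma sort_pair {a b : ℕ} (hab : b ≤ a) :
    Multiset.sort ({a, b} : Multiset ℕ) (· ≤ ·) = [b, a] := by
  apply sort_eq_of_sorted
  · rw [show ([b, a] : List ℕ) = [b] ++ [a] from rfl, ← Multiset.coe_add]
    rw [show ({a, b} : Multiset ℕ) = a ::ₘ b ::ₘ 0 from rfl]
    have : (([b] : List ℕ) : Multiset ℕ) = b ::ₘ 0 := rfl
    rw [this, show (([a] : List ℕ) : Multiset ℕ) = a ::ₘ 0 from rfl]
    show b ::ₘ a ::ₘ 0 = a ::ₘ b ::ₘ 0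
    exact Multiset.cons_swap b a 0
  · simp [List.pairwise_cons, hab]

lemma parts_pair {a b : ℕ} (hab : b ≤ a) (k : ℕ) :
    (Partition'.ofMul {a, b}).parts k = if k = 0 then a else if k = 1 then b else 0 := by
  show (((({a, b} : Multiset ℕ).sort (· ≤ ·)).reverse).getD k 0) = _
  rw [sort_pair hab]
  match k with
  | 0 => rfl
  | 1 => rfl
  | (n+2) => simp [List.getD]

lemma sort_rep (a b : ℕ) :
    Multiset.sort (Multiset.replicate a 2 + Multiset.replicate b 1) (· ≤ ·) =
      List.replicate b 1 ++ List.replicate a 2 := by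
  apply sort_eq_of_sorted
  · rw [← Multiset.coe_add, Multiset.coe_replicate, Multiset.coe_replicate, add_comm]
  · rw [List.pairwise_append]
    refine ⟨List.pairwise_replicate.mpr (by simp), List.pairwise_replicate.mpr (by simp), ?_⟩
    intro x hx y hy
    rw [List.eq_of_mem_replicate hx, List.eq_of_mem_replicate hy]
    norm_num

lemma parts_rep (a b k : ℕ) :
    (Partition'.ofMul (Multiset.replicate a 2 + Multiset.replicate b 1)).parts k =
      if k < a then 2 else if k < a + b then 1 else 0 := by
  show ((((Multiset.replicate a 2 + Multiset.replicate b 1).sort (· ≤ ·)).reverse).getD k 0) = _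
  rw [sort_rep, List.reverse_append, List.reverse_replicate, List.reverse_replicate]
  rcases lt_or_ge k a with h | h
  · rw [List.getD_append (List.replicate a 2) (List.replicate b 1) 0 k
      (by rw [List.length_replicate]; exact h)]
    rw [List.getD_eq_getElem _ _ (by rw [List.length_replicate]; exact h)]
    rw [List.getElem_replicate]
    simp [h]
  · rw [List.getD_append_right (List.replicate a 2) (List.replicate b 1) 0 k
      (by rw [List.length_replicate]; exact h)]
    rw [List.length_replicate]
    rcases lt_or_ge k (a + b) with h2 | h2
    · rw [List.getD_eq_getElem _ _ (by rw [List.length_replicate]; omega)]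
      rw [List.getElem_replicate]
      split_ifs <;> omega
    · rw [List.getD_eq_default _ _ (by rw [List.length_replicate]; omega)]
      split_ifs <;> omega

lemma size_eq_sum (p : Partition') (M : ℕ) (hM : p.parts M = 0) :
    p.size = ∑ i ∈ Finset.range M, p.parts i := by
  have hzero : ∀ i, Nat.find p.exists_zero ≤ i → p.parts i = 0 := fun i hi =>
    Nat.le_zero.mp ((Nat.find_spec p.exists_zero) ▸ p.antitone' hi)
  have hzero' : ∀ i, M ≤ i → p.parts i = 0 := fun i hi => Nat.le_zero.mp (hM ▸ p.antitone' hi)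
  unfold Partition'.size
  have e1 : ∑ i ∈ Finset.range (Nat.find p.exists_zero), p.parts i
      = ∑ i ∈ Finset.range (max (Nat.find p.exists_zero) M), p.parts i :=
    Finset.sum_subset (Finset.range_subset_range.mpr (le_max_left _ _))
      (fun x _ hx => hzero x (le_of_not_gt (fun hc => hx (Finset.mem_range.mpr hc))))
  have e2 : ∑ i ∈ Finset.range M, p.parts i
      = ∑ i ∈ Finset.range (max (Nat.find p.exists_zero) M), p.parts i :=
    Finset.sum_subset (Finset.range_subset_range.mpr (le_max_right _ _))
      (fun x _ hx => hzero' x (le_of_not_gt (fun hc => hx (Finset.mem_range.mpr hc))))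
  rw [e1, e2]

lemma sum_getD (l : List ℕ) : ∑ i ∈ Finset.range l.length, l.getD i 0 = l.sum := by
  induction l with
  | nil => simp
  | cons a t ih =>
    rw [List.length_cons, Finset.sum_range_succ']
    simp only [List.getD_cons_succ, List.getD_cons_zero, List.sum_cons, ih]
    omega

lemma size_ofMul (m : Multiset ℕ) : (Partition'.ofMul m).size = m.sum := by
  rw [size_eq_sum _ ((m.sort (· ≤ ·)).reverse).length (List.getD_eq_default _ _ le_rfl)]
  show ∑ i ∈ Finset.range _, ((m.sort (· ≤ ·)).reverse).getD i 0 = _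
  rw [sum_getD]
  simp [List.sum_reverse]
  rw [← Multiset.sum_coe, Multiset.sort_eq]

end DN6
namespace DN6

lemma betaSet_strictAnti (p : Partition') (s : ℤ) : StrictAnti (betaSet p s) := by
  apply strictAnti_nat_of_succ_lt
  intro k
  have := p.antitone' (show k ≤ k + 1 by omega)
  unfold betaSet
  push_cast
  omega

lemma strictAnti_range_eq {f g : ℕ → ℤ} (hf : StrictAnti f) (hg : StrictAnti g)
    (h : Set.range f = Set.range g) : f = g := by
  funext k
  induction k using Nat.strong_induction_on with
  | _ k ih =>
    obtain ⟨m, hm⟩ : f k ∈ Set.range g := h ▸ Set.mem_range_self k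
    obtain ⟨m', hm'⟩ : g k ∈ Set.range f := h.symm ▸ Set.mem_range_self k
    have hmk : k ≤ m := by
      by_contra hc
      push_neg at hc
      have := ih m hc
      exact absurd (hf.injective (by omega : f m = f k)) (by omega)
    have hmk' : k ≤ m' := by
      by_contra hc
      push_neg at hc
      have := ih m' hc
      exact absurd (hg.injective (by rw [← hm', this] : g m' = g k)) (by omega)
    have h1 : f k ≤ g k := hm ▸ hg.antitone hmk
    have h2 : g k ≤ f k := hm' ▸ hf.antitone hmk'
    omega

lemma range_beta_eq {p q : Partition'} {s : ℤ}
    (h : Set.range (betaSet p s) = Set.range (betaSet q s)) : p = q := by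
  have := strictAnti_range_eq (betaSet_strictAnti p s) (betaSet_strictAnti q s) h
  apply Partition'.ext'
  funext k
  have := congrFun this k
  unfold betaSet at this
  omega

lemma parts_eventually_zero (p : Partition') {K k : ℕ} (hK : p.parts K = 0) (h : K ≤ k) :
    p.parts k = 0 := Nat.le_zero.mp (hK ▸ p.antitone' h)

lemma range_beta_pair (c d : ℕ) (hcd : d ≤ c) :
    Set.range (betaSet (Partition'.ofMul {c, d}) 2) =
      Lo 0 ∪ {(c : ℤ) + 2, (d : ℤ) + 1} := by
  ext z
  simp only [Set.mem_range, Set.mem_union, Set.mem_insert_iff, Set.mem_singleton_iff, mem_Lo]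
  constructor
  · rintro ⟨k, rfl⟩
    unfold betaSet
    rw [parts_pair hcd]
    split_ifs <;> push_cast <;> omega
  · intro hz
    rcases hz with hz | hz | hz
    · refine ⟨(2 - z).toNat, ?_⟩
      unfold betaSet
      rw [parts_pair hcd]
      split_ifs <;> push_cast <;> omega
    · exact ⟨0, by unfold betaSet; rw [parts_pair hcd]; simp; omega⟩
    · exact ⟨1, by unfold betaSet; rw [parts_pair hcd]; simp; omega⟩

lemma range_beta_rep (a b : ℕ) :
    Set.range (betaSet (Partition'.ofMul (Multiset.replicate a 2 + Multiset.replicate b 1)) (-3)) =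
      Lo (-1) \ {-(a : ℤ) - 1, -(a : ℤ) - (b : ℤ) - 2} := by
  ext z
  simp only [Set.mem_range, Set.mem_diff, Set.mem_insert_iff, Set.mem_singleton_iff, mem_Lo]
  constructor
  · rintro ⟨k, rfl⟩
    unfold betaSet
    rw [parts_rep]
    split_ifs <;> push_cast <;> omega
  · rintro ⟨hz, hz2⟩
    push_neg at hz2
    rcases le_or_gt (-(a:ℤ)) z with h1 | h1
    · refine ⟨(-1 - z).toNat, ?_⟩
      unfold betaSet
      rw [parts_rep]
      split_ifs <;> push_cast <;> omega
    · rcases le_or_gt (-(a:ℤ) - (b:ℤ) - 1) z with h2 | h2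
      · refine ⟨(-2 - z).toNat, ?_⟩
        unfold betaSet
        rw [parts_rep]
        split_ifs <;> push_cast <;> omega
      · refine ⟨(-3 - z).toNat, ?_⟩
        unfold betaSet
        rw [parts_rep]
        split_ifs <;> push_cast <;> omega

lemma two_big (p : Partition') :
    ∃ u v : ℤ, u ∈ Set.range (betaSet p 2) ∧ v ∈ Set.range (betaSet p 2) ∧
      1 ≤ v ∧ v < u := by
  refine ⟨betaSet p 2 0, betaSet p 2 1, Set.mem_range_self 0, Set.mem_range_self 1, ?_, ?_⟩
  · unfold betaSet; push_cast; omega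
  · exact betaSet_strictAnti p 2 (by omega)

end DN6
namespace DN6
open Set

def posP (S : Set ℤ) : Set ℤ := {z | z ∈ S ∧ 0 < z}
def negM (S : Set ℤ) : Set ℤ := {z | z ≤ 0 ∧ z ∉ S}
def BSet (S : Set ℤ) : Prop := (posP S).Finite ∧ (negM S).Finite

noncomputable def mu0 (S : Set ℤ) : ℤ := (∑ᶠ z ∈ posP S, z) - ∑ᶠ z ∈ negM S, z

lemma fin_sum_remove {A : Set ℤ} (hA : A.Finite) {x : ℤ} (hx : x ∈ A) :
    ∑ᶠ z ∈ A \ {x}, (z : ℤ) = (∑ᶠ z ∈ A, (z : ℤ)) - x := by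
  have h1 : A = (A \ {x}) ∪ {x} := by
    ext z; simp only [Set.mem_union, Set.mem_diff, Set.mem_singleton_iff]
    constructor
    · intro h; by_cases hz : z = x
      · exact Or.inr hz
      · exact Or.inl ⟨h, hz⟩
    · rintro (⟨h, _⟩ | rfl) <;> [exact h; exact hx]
  have h2 : (∑ᶠ z ∈ A, (z : ℤ)) = (∑ᶠ z ∈ A \ {x}, (z : ℤ)) + ∑ᶠ z ∈ ({x} : Set ℤ), (z : ℤ) := by
    conv_lhs => rw [h1]
    exact finsum_mem_union (by simp) hA.diff (Set.finite_singleton x)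
  rw [finsum_mem_singleton] at h2
  omega

lemma fin_sum_insert {A : Set ℤ} (hA : A.Finite) {x : ℤ} (hx : x ∉ A) :
    ∑ᶠ z ∈ A ∪ {x}, (z : ℤ) = (∑ᶠ z ∈ A, (z : ℤ)) + x := by
  rw [finsum_mem_union (by simpa using hx) hA (Set.finite_singleton x), finsum_mem_singleton]

lemma mu0_nonneg {S : Set ℤ} (h : BSet S) : 0 ≤ mu0 S := by
  unfold mu0
  have h1 : 0 ≤ ∑ᶠ z ∈ posP S, (z : ℤ) := by
    rw [finsum_mem_eq_finite_toFinset_sum _ h.1]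
    apply Finset.sum_nonneg
    intro z hz
    have := (Set.Finite.mem_toFinset h.1).mp hz
    exact le_of_lt this.2
  have h2 : (∑ᶠ z ∈ negM S, (z : ℤ)) ≤ 0 := by
    rw [finsum_mem_eq_finite_toFinset_sum _ h.2]
    apply Finset.sum_nonpos
    intro z hz
    exact ((Set.Finite.mem_toFinset h.2).mp hz).1
  omega

lemma posP_diff_pos {S : Set ℤ} {x : ℤ} (hx : 0 < x) : posP (S \ {x}) = posP S \ {x} := by
  ext z; simp only [posP, Set.mem_diff, Set.mem_setOf_eq, Set.mem_singleton_iff]; tauto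

lemma negM_diff_pos {S : Set ℤ} {x : ℤ} (hx : 0 < x) : negM (S \ {x}) = negM S := by
  ext z; simp only [negM, Set.mem_diff, Set.mem_setOf_eq, Set.mem_singleton_iff]
  constructor
  · rintro ⟨h1, h2⟩; exact ⟨h1, fun hz => h2 ⟨hz, by omega⟩⟩
  · rintro ⟨h1, h2⟩; exact ⟨h1, fun hz => h2 hz.1⟩

lemma posP_diff_neg {S : Set ℤ} {x : ℤ} (hx : x ≤ 0) : posP (S \ {x}) = posP S := by
  ext z; simp only [posP, Set.mem_diff, Set.mem_setOf_eq, Set.mem_singleton_iff]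
  constructor
  · rintro ⟨⟨h1, _⟩, h2⟩; exact ⟨h1, h2⟩
  · rintro ⟨h1, h2⟩; exact ⟨⟨h1, by omega⟩, h2⟩

lemma negM_diff_neg {S : Set ℤ} {x : ℤ} (hx : x ≤ 0) (hxS : x ∈ S) :
    negM (S \ {x}) = negM S ∪ {x} := by
  ext z
  simp only [negM, Set.mem_diff, Set.mem_union, Set.mem_setOf_eq, Set.mem_singleton_iff]
  constructor
  · rintro ⟨h1, h2⟩
    by_cases hz : z = x
    · exact Or.inr hz
    · exact Or.inl ⟨h1, fun hS => h2 ⟨hS, hz⟩⟩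
  · rintro (⟨h1, h2⟩ | rfl)
    · exact ⟨h1, fun h => h2 h.1⟩
    · exact ⟨hx, fun h => h.2 rfl⟩

lemma posP_union_pos {S : Set ℤ} {x : ℤ} (hx : 0 < x) : posP (S ∪ {x}) = posP S ∪ {x} := by
  ext z; simp only [posP, Set.mem_union, Set.mem_setOf_eq, Set.mem_singleton_iff]
  constructor
  · rintro ⟨h1 | h1, h2⟩
    · exact Or.inl ⟨h1, h2⟩
    · exact Or.inr h1
  · rintro (⟨h1, h2⟩ | rfl)
    · exact ⟨Or.inl h1, h2⟩
    · exact ⟨Or.inr rfl, hx⟩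

lemma negM_union_pos {S : Set ℤ} {x : ℤ} (hx : 0 < x) : negM (S ∪ {x}) = negM S := by
  ext z; simp only [negM, Set.mem_union, Set.mem_setOf_eq, Set.mem_singleton_iff]
  constructor
  · rintro ⟨h1, h2⟩; exact ⟨h1, fun h => h2 (Or.inl h)⟩
  · rintro ⟨h1, h2⟩; exact ⟨h1, fun h => by rcases h with h | rfl; exact h2 h; omega⟩

lemma posP_union_neg {S : Set ℤ} {x : ℤ} (hx : x ≤ 0) : posP (S ∪ {x}) = posP S := by
  ext z; simp only [posP, Set.mem_union, Set.mem_setOf_eq, Set.mem_singleton_iff]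
  constructor
  · rintro ⟨h1 | rfl, h2⟩
    · exact ⟨h1, h2⟩
    · omega
  · rintro ⟨h1, h2⟩; exact ⟨Or.inl h1, h2⟩

lemma negM_union_neg {S : Set ℤ} {x : ℤ} (hx : x ≤ 0) : negM (S ∪ {x}) = negM S \ {x} := by
  ext z
  simp only [negM, Set.mem_diff, Set.mem_union, Set.mem_setOf_eq, Set.mem_singleton_iff]
  constructor
  · rintro ⟨h1, h2⟩
    exact ⟨⟨h1, fun h => h2 (Or.inl h)⟩, fun h => h2 (Or.inr h)⟩
  · rintro ⟨⟨h1, h2⟩, h3⟩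
    exact ⟨h1, fun h => by rcases h with h | h; exact h2 h; exact h3 h⟩

lemma BSet.diff {S : Set ℤ} (h : BSet S) (x : ℤ) (hxS : x ∈ S) : BSet (S \ {x}) := by
  rcases le_or_gt x 0 with hx | hx
  · exact ⟨by rw [posP_diff_neg hx]; exact h.1,
      by rw [negM_diff_neg hx hxS]; exact h.2.union (Set.finite_singleton x)⟩
  · exact ⟨by rw [posP_diff_pos hx]; exact h.1.diff,
      by rw [negM_diff_pos hx]; exact h.2⟩

lemma BSet.union {S : Set ℤ} (h : BSet S) (x : ℤ) : BSet (S ∪ {x}) := by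
  rcases le_or_gt x 0 with hx | hx
  · exact ⟨by rw [posP_union_neg hx]; exact h.1,
      by rw [negM_union_neg hx]; exact h.2.diff⟩
  · exact ⟨by rw [posP_union_pos hx]; exact h.1.union (Set.finite_singleton x),
      by rw [negM_union_pos hx]; exact h.2⟩

lemma mu0_diff {S : Set ℤ} (h : BSet S) {x : ℤ} (hx : x ∈ S) : mu0 (S \ {x}) = mu0 S - x := by
  unfold mu0
  rcases le_or_gt x 0 with hx0 | hx0
  · rw [posP_diff_neg hx0, negM_diff_neg hx0 hx,
      fin_sum_insert h.2 (fun hc => hc.2 hx)]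
    omega
  · rw [posP_diff_pos hx0, negM_diff_pos hx0, fin_sum_remove h.1 ⟨hx, hx0⟩]
    omega

lemma mu0_union {S : Set ℤ} (h : BSet S) {x : ℤ} (hx : x ∉ S) : mu0 (S ∪ {x}) = mu0 S + x := by
  unfold mu0
  rcases le_or_gt x 0 with hx0 | hx0
  · rw [posP_union_neg hx0, negM_union_neg hx0, fin_sum_remove h.2 ⟨hx0, hx⟩]
    omega
  · rw [posP_union_pos hx0, negM_union_pos hx0, fin_sum_insert h.1 (fun hc => hx hc.1)]
    omega

def GoodSym (Λ : Set ℤ × Set ℤ) : Prop := BSet Λ.1 ∧ BSet Λ.2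

noncomputable def muS (Λ : Set ℤ × Set ℤ) : ℤ := mu0 Λ.1 + mu0 Λ.2

lemma step_mu {n : ℕ} {Λ Λ' : Set ℤ × Set ℤ} (hΛ : GoodSym Λ) (h : CohookStep n Λ Λ') :
    GoodSym Λ' ∧ muS Λ' = muS Λ - n := by
  rcases h with ⟨x, hx1, hx2, rfl⟩ | ⟨x, hx1, hx2, rfl⟩
  · constructor
    · exact ⟨hΛ.2.union x, hΛ.1.diff _ hx1⟩
    · show mu0 (Λ.2 ∪ {x}) + mu0 (Λ.1 \ {x + n}) = mu0 Λ.1 + mu0 Λ.2 - n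
      rw [mu0_union hΛ.2 hx2, mu0_diff hΛ.1 hx1]
      omega
  · constructor
    · exact ⟨hΛ.2.diff _ hx1, hΛ.1.union x⟩
    · show mu0 (Λ.2 \ {x + n}) + mu0 (Λ.1 ∪ {x}) = mu0 Λ.1 + mu0 Λ.2 - n
      rw [mu0_union hΛ.1 hx2, mu0_diff hΛ.2 hx1]
      omega

lemma posP_Lo {r : ℤ} (hr : r ≤ 0) : posP (Lo r) = ∅ := by
  ext z; simp [posP, Lo]; omega

lemma mu0_Lo0 : mu0 (Lo 0) = 0 := by
  have h1 : posP (Lo 0) = ∅ := posP_Lo le_rfl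
  have h2 : negM (Lo 0) = ∅ := by ext z; simp [negM, Lo]
  unfold mu0
  rw [h1, h2]
  simp

lemma mu0_Lom1 : mu0 (Lo (-1)) = 0 := by
  have h1 : posP (Lo (-1)) = ∅ := posP_Lo (by omega)
  have h2 : negM (Lo (-1)) = {0} := by ext z; simp [negM, Lo]; omega
  unfold mu0
  rw [h1, h2]
  simp [finsum_mem_singleton]

lemma muS_trivial : muS trivialSymbol = 0 := by
  show mu0 (Lo 0) + mu0 (Lo (-1)) = 0
  rw [mu0_Lo0, mu0_Lom1]
  ring

end DN6
namespace DN6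
open Set

lemma beta_tail (p : Partition') (s : ℤ) {K i : ℕ} (hK : p.parts K = 0) (h : K ≤ i) :
    betaSet p s i = s - i := by
  unfold betaSet
  rw [parts_eventually_zero p hK h]
  simp

lemma BSet_mu0_beta (p : Partition') (s : ℤ) (K : ℕ) (hK : p.parts K = 0) (hsK : s < (K : ℤ)) :
    BSet (Set.range (betaSet p s)) ∧
    mu0 (Set.range (betaSet p s)) = (p.size : ℤ) +
      ((∑ z ∈ Finset.Ioc (0 : ℤ) s, z) - ∑ z ∈ Finset.Ioc s (0 : ℤ), z) := by
  set f := betaSet p s with hf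
  have hfa : StrictAnti f := betaSet_strictAnti p s
  have hfK : ∀ i, K ≤ i → f i = s - i := fun i h => beta_tail p s hK h
  set F : Finset ℤ := (Finset.range K).image f with hF
  have hFgt : ∀ z ∈ F, s - K < z := by
    intro z hz
    obtain ⟨i, hi, rfl⟩ := Finset.mem_image.mp hz
    have h1 : f K = s - K := hfK K le_rfl
    have h2 : f K < f i := hfa (Finset.mem_range.mp hi)
    omega
  have hposP : posP (Set.range f) = ↑(F.filter (fun z => 0 < z)) := by
    ext z
    rw [Finset.mem_coe, Finset.mem_filter, hF]
    simp only [posP, Set.mem_setOf_eq, Set.mem_range, Finset.mem_image, Finset.mem_range]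
    constructor
    · rintro ⟨⟨i, rfl⟩, hz⟩
      refine ⟨⟨i, ?_, rfl⟩, hz⟩
      by_contra hc
      push_neg at hc
      have := hfK i hc
      omega
    · rintro ⟨⟨i, _, rfl⟩, hz⟩
      exact ⟨⟨i, rfl⟩, hz⟩
  have hnegM : negM (Set.range f) = ↑(Finset.Ioc (s - (K : ℤ)) 0 \ F) := by
    ext z
    rw [Finset.mem_coe, Finset.mem_sdiff, hF]
    simp only [negM, Set.mem_setOf_eq, Set.mem_range, Finset.mem_Ioc, Finset.mem_image,
      Finset.mem_range]
    constructor
    · rintro ⟨hz1, hz2⟩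
      constructor
      · refine ⟨?_, hz1⟩
        by_contra hc
        push_neg at hc
        apply hz2
        refine ⟨(s - z).toNat, ?_⟩
        rw [hfK _ (by omega)]
        omega
      · rintro ⟨i, _, rfl⟩
        exact hz2 ⟨i, rfl⟩
    · rintro ⟨⟨hz1, hz2⟩, hz3⟩
      refine ⟨hz2, ?_⟩
      rintro ⟨i, rfl⟩
      rcases lt_or_ge i K with h | h
      · exact hz3 ⟨i, h, rfl⟩
      · have := hfK i h
        omega
  have hBS : BSet (Set.range f) := by
    constructor
    · rw [hposP]; exact (F.filter _).finite_toSet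
    · rw [hnegM]; exact (Finset.Ioc _ _ \ F).finite_toSet
  refine ⟨hBS, ?_⟩
  unfold mu0
  rw [hposP, hnegM, finsum_mem_coe_finset, finsum_mem_coe_finset]
  have hsd : Finset.Ioc (s - (K : ℤ)) 0 \ F = Finset.Ioc (s - (K : ℤ)) 0 \
      (F ∩ Finset.Ioc (s - (K : ℤ)) 0) := by
    ext z
    simp only [Finset.mem_sdiff, Finset.mem_inter]
    tauto
  rw [hsd, Finset.sum_sdiff_eq_sub (Finset.inter_subset_right)]
  have hFI : F ∩ Finset.Ioc (s - (K : ℤ)) 0 = F.filter (fun z => ¬ 0 < z) := by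
    ext z
    simp only [Finset.mem_inter, Finset.mem_Ioc, Finset.mem_filter, not_lt]
    constructor
    · rintro ⟨h1, h2, h3⟩; exact ⟨h1, h3⟩
    · rintro ⟨h1, h2⟩; exact ⟨h1, hFgt z h1, h2⟩
  rw [hFI]
  have hsplit : (∑ z ∈ F.filter (fun z => 0 < z), z) + ∑ z ∈ F.filter (fun z => ¬ 0 < z), z
      = ∑ z ∈ F, z := Finset.sum_filter_add_sum_filter_not F _ _
  have hFsum : ∑ z ∈ F, z = ∑ i ∈ Finset.range K, f i :=
    Finset.sum_image (fun i _ j _ h => hfa.injective h)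
  have hfsum : ∑ i ∈ Finset.range K, f i
      = (p.size : ℤ) + ∑ i ∈ Finset.range K, (s - (i : ℤ)) := by
    have : ∀ i, f i = (p.parts i : ℤ) + (s - (i : ℤ)) := by
      intro i; unfold f; unfold betaSet; ring
    rw [Finset.sum_congr rfl (fun i _ => this i), Finset.sum_add_distrib]
    congr 1
    rw [size_eq_sum p K hK]
    push_cast
    rfl
  have hreindex : ∑ i ∈ Finset.range K, (s - (i : ℤ)) = ∑ z ∈ Finset.Ioc (s - (K : ℤ)) s, z := by
    refine Finset.sum_bij (fun i _ => s - (i : ℤ)) ?_ ?_ ?_ ?_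
    · intro i hi
      simp only [Finset.mem_range] at hi
      simp only [Finset.mem_Ioc]
      omega
    · intro i hi j hj h
      have h' : s - (i : ℤ) = s - (j : ℤ) := h
      omega
    · intro z hz
      simp only [Finset.mem_Ioc] at hz
      exact ⟨(s - z).toNat, by simp only [Finset.mem_range]; omega,
        show s - ((s - z).toNat : ℤ) = z by omega⟩
    · intro i _
      rfl
  have hIoc : (∑ z ∈ Finset.Ioc (s - (K : ℤ)) s, z) - ∑ z ∈ Finset.Ioc (s - (K : ℤ)) 0, z
      = (∑ z ∈ Finset.Ioc (0 : ℤ) s, z) - ∑ z ∈ Finset.Ioc s (0 : ℤ), z := by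
    have key : ∀ a b c : ℤ, a ≤ b → b ≤ c →
        (∑ z ∈ Finset.Ioc a b, z) + ∑ z ∈ Finset.Ioc b c, z = ∑ z ∈ Finset.Ioc a c, z := by
      intro a b c hab hbc
      rw [← Finset.Ioc_union_Ioc_eq_Ioc hab hbc, Finset.sum_union]
      rw [Finset.disjoint_left]
      intro z hz1 hz2
      simp only [Finset.mem_Ioc] at hz1 hz2
      omega
    rcases le_or_gt 0 s with hs | hs
    · rw [show Finset.Ioc s (0 : ℤ) = ∅ from Finset.Ioc_eq_empty (by omega)]
      have := key (s - (K : ℤ)) 0 s (by omega) hs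
      simp only [Finset.sum_empty]
      omega
    · rw [show Finset.Ioc (0 : ℤ) s = ∅ from Finset.Ioc_eq_empty (by omega)]
      have := key (s - (K : ℤ)) s 0 (by omega) (le_of_lt hs)
      simp only [Finset.sum_empty]
      omega
  omega

end DN6
namespace DN6
open Set

lemma sigmaT_two : sigmaT 2 = ((2 : ℤ), (-3 : ℤ)) := by
  unfold sigmaT
  norm_num

lemma symbolOf_two (l : Bipartition) :
    symbolOf l (sigmaT 2) =
      (Set.range (betaSet l.1 2), Set.range (betaSet l.2 (-3))) := by
  rw [sigmaT_two]
  rfl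

lemma muS_nonneg {Λ : Set ℤ × Set ℤ} (h : GoodSym Λ) : 0 ≤ muS Λ := by
  have := mu0_nonneg h.1
  have := mu0_nonneg h.2
  unfold muS
  omega

lemma good_mu_symbol (l : Bipartition) :
    GoodSym (symbolOf l (sigmaT 2)) ∧
      muS (symbolOf l (sigmaT 2)) = (l.size : ℤ) + 6 := by
  rw [symbolOf_two]
  have h1 := BSet_mu0_beta l.1 2 (max (Nat.find l.1.exists_zero) 3)
    (parts_eventually_zero l.1 (Nat.find_spec l.1.exists_zero) (le_max_left _ _))
    (by have := le_max_right (Nat.find l.1.exists_zero) 3; push_cast; omega)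
  have h2 := BSet_mu0_beta l.2 (-3) (Nat.find l.2.exists_zero)
    (Nat.find_spec l.2.exists_zero) (by omega)
  have e1 : (∑ z ∈ Finset.Ioc (0 : ℤ) 2, z) = 3 := by decide
  have e2 : (∑ z ∈ Finset.Ioc (2 : ℤ) 0, z) = 0 := by
    rw [Finset.Ioc_eq_empty (by omega)]; simp
  have e3 : (∑ z ∈ Finset.Ioc (0 : ℤ) (-3), z) = 0 := by
    rw [Finset.Ioc_eq_empty (by omega)]; simp
  have e4 : (∑ z ∈ Finset.Ioc (-3 : ℤ) 0, z) = -3 := by decide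
  rw [e1, e2] at h1
  rw [e3, e4] at h2
  refine ⟨⟨h1.1, h2.1⟩, ?_⟩
  show mu0 _ + mu0 _ = _
  rw [h1.2, h2.2]
  show (l.1.size : ℤ) + (3 - 0) + ((l.2.size : ℤ) + (0 - -3)) = ((l.1.size + l.2.size : ℕ) : ℤ) + 6
  push_cast
  ring

lemma no_step_trivial {n : ℕ} (hn : 1 ≤ n) (C' : Set ℤ × Set ℤ) :
    ¬ CohookStep n trivialSymbol C' := by
  rintro (⟨x, hx1, hx2, _⟩ | ⟨x, hx1, hx2, _⟩)
  · have h1 : x + (n : ℤ) ≤ 0 := hx1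
    have h2 : ¬ (x ≤ -1) := hx2
    omega
  · have h1 : x + (n : ℤ) ≤ -1 := hx1
    have h2 : ¬ (x ≤ 0) := hx2
    omega

lemma terminal_trivial {n : ℕ} (hn : 3 ≤ n) {C : Set ℤ × Set ℤ} (hG : GoodSym C)
    (hmu : muS C = 0) (h : Relation.ReflTransGen (CohookStep n) C trivialSymbol) :
    C = trivialSymbol := by
  rcases Relation.ReflTransGen.cases_head h with h | ⟨C', hC', _⟩
  · exact h
  · exfalso
    obtain ⟨hG', hmu'⟩ := step_mu hG hC'
    have := muS_nonneg hG'
    omega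

lemma reach_two {n : ℕ} (hn : 3 ≤ n) {Λ : Set ℤ × Set ℤ} (hG : GoodSym Λ)
    (hmu : muS Λ = 2 * n) (h : Relation.ReflTransGen (CohookStep n) Λ trivialSymbol) :
    ∃ Λ₁, CohookStep n Λ Λ₁ ∧ CohookStep n Λ₁ trivialSymbol := by
  rcases Relation.ReflTransGen.cases_head h with h0 | ⟨Λ₁, h1, h1'⟩
  · exfalso
    rw [h0, muS_trivial] at hmu
    omega
  · obtain ⟨hG1, hmu1⟩ := step_mu hG h1
    rcases Relation.ReflTransGen.cases_head h1' with h0 | ⟨Λ₂, h2, h2'⟩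
    · exfalso
      rw [h0, muS_trivial] at hmu1
      omega
    · obtain ⟨hG2, hmu2⟩ := step_mu hG1 h2
      have : Λ₂ = trivialSymbol := terminal_trivial hn hG2 (by omega) h2'
      exact ⟨Λ₁, h1, this ▸ h2⟩

end DN6
namespace DN6
open Set

lemma prod_eq_iff {A B C D : Set ℤ} : (A, B) = (C, D) ↔ A = C ∧ B = D := by
  constructor
  · intro h; exact ⟨congrArg Prod.fst h, congrArg Prod.snd h⟩
  · rintro ⟨rfl, rfl⟩; rfl

lemma solve_last {n : ℕ} {Λ₁ : Set ℤ × Set ℤ} (h : CohookStep n Λ₁ trivialSymbol) :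
    (∃ x : ℤ, x ≤ 0 ∧ 0 ≤ x + n ∧ Λ₁ = (Lo (-1) ∪ {x + n}, Lo 0 \ {x})) ∨
    (∃ x : ℤ, x ≤ -1 ∧ 1 ≤ x + n ∧ Λ₁ = (Lo (-1) \ {x}, Lo 0 ∪ {x + n})) := by
  rcases h with ⟨x, hx1, hx2, heq⟩ | ⟨x, hx1, hx2, heq⟩
  · left
    have h1 : Lo 0 = Λ₁.2 ∪ {x} := congrArg Prod.fst heq
    have h2 : Lo (-1) = Λ₁.1 \ {x + n} := congrArg Prod.snd heq
    have hx0 : x ≤ 0 := (Set.ext_iff.mp h1 x).mpr (Or.inr rfl)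
    have hxn : ¬ (x + (n : ℤ) ≤ -1) := by
      intro hc
      have := (Set.ext_iff.mp h2 (x + n)).mp hc
      exact this.2 rfl
    refine ⟨x, hx0, by omega, ?_⟩
    rw [prod_eq_iff]
    constructor
    · ext z
      have e2 := Set.ext_iff.mp h2 z
      simp only [Set.mem_union, Set.mem_diff, Set.mem_singleton_iff, mem_Lo] at e2 ⊢
      constructor
      · intro hz
        by_cases hzx : z = x + n
        · exact Or.inr hzx
        · exact Or.inl (e2.mpr ⟨hz, hzx⟩)
      · rintro (hz | rfl)
        · exact (e2.mp hz).1
        · exact hx1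
    · ext z
      have e1 := Set.ext_iff.mp h1 z
      simp only [Set.mem_union, Set.mem_diff, Set.mem_singleton_iff, mem_Lo] at e1 ⊢
      constructor
      · intro hz
        refine ⟨e1.mpr (Or.inl hz), ?_⟩
        rintro rfl
        exact hx2 hz
      · rintro ⟨hz1, hz2⟩
        rcases e1.mp hz1 with hz | hz
        · exact hz
        · exact absurd hz hz2
  · right
    have h1 : Lo 0 = Λ₁.2 \ {x + n} := congrArg Prod.fst heq
    have h2 : Lo (-1) = Λ₁.1 ∪ {x} := congrArg Prod.snd heq
    have hx0 : x ≤ -1 := (Set.ext_iff.mp h2 x).mpr (Or.inr rfl)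
    have hxn : ¬ (x + (n : ℤ) ≤ 0) := by
      intro hc
      have := (Set.ext_iff.mp h1 (x + n)).mp hc
      exact this.2 rfl
    refine ⟨x, hx0, by omega, ?_⟩
    rw [prod_eq_iff]
    constructor
    · ext z
      have e2 := Set.ext_iff.mp h2 z
      simp only [Set.mem_union, Set.mem_diff, Set.mem_singleton_iff, mem_Lo] at e2 ⊢
      constructor
      · intro hz
        refine ⟨e2.mpr (Or.inl hz), ?_⟩
        rintro rfl
        exact hx2 hz
      · rintro ⟨hz1, hz2⟩
        rcases e2.mp hz1 with hz | hz
        · exact hz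
        · exact absurd hz hz2
    · ext z
      have e1 := Set.ext_iff.mp h1 z
      simp only [Set.mem_union, Set.mem_diff, Set.mem_singleton_iff, mem_Lo] at e1 ⊢
      constructor
      · intro hz
        by_cases hzx : z = x + n
        · exact Or.inr hzx
        · exact Or.inl (e1.mpr ⟨hz, hzx⟩)
      · rintro (hz | rfl)
        · exact (e1.mp hz).1
        · exact hx1

lemma build_mem {n : ℕ} (hn : 3 ≤ n) {l : Bipartition} (i j : ℕ)
    (h0 : 0 < i) (hij : i < j) (hjn : j < n)
    (hX : Set.range (betaSet l.1 2) = Lo 0 ∪ {(n : ℤ) - i, (n : ℤ) - j})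
    (hY : Set.range (betaSet l.2 (-3)) = Lo (-1) \ {-(i : ℤ), -(j : ℤ)}) :
    l ∈ LB6 n := by
  refine ⟨i, j, h0, hij, hjn, ?_⟩
  have e1 : l.1 = Partition'.ofMul {n - i - 2, n - j - 1} := by
    apply range_beta_eq
    rw [range_beta_pair (n - i - 2) (n - j - 1) (by omega), hX]
    ext z
    simp only [Set.mem_union, Set.mem_insert_iff, Set.mem_singleton_iff, mem_Lo]
    omega
  have e2 : l.2 = Partition'.ofMul
      (Multiset.replicate (i - 1) 2 + Multiset.replicate (j - i - 1) 1) := by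
    apply range_beta_eq
    rw [range_beta_rep (i - 1) (j - i - 1), hY]
    ext z
    simp only [Set.mem_diff, Set.mem_insert_iff, Set.mem_singleton_iff, mem_Lo]
    omega
  show l = bip _ _
  rw [show l = (l.1, l.2) from rfl, e1, e2]
  rfl

lemma forward {n : ℕ} (hn : 3 ≤ n) {l : Bipartition} (hsize : l.size = 2 * n - 6)
    (h : IsCocore n (symbolOf l (sigmaT 2)) trivialSymbol) : l ∈ LB6 n := by
  obtain ⟨hreach, -⟩ := h
  obtain ⟨hG, hmu⟩ := good_mu_symbol l
  have hmu' : muS (symbolOf l (sigmaT 2)) = 2 * n := by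
    rw [hmu, hsize]
    have : (6 : ℕ) ≤ 2 * n := by omega
    omega
  obtain ⟨Λ₁, s1, s2⟩ := reach_two hn hG hmu' hreach
  rw [symbolOf_two] at s1
  set X := Set.range (betaSet l.1 2) with hXdef
  set Y := Set.range (betaSet l.2 (-3)) with hYdef
  obtain ⟨u, v, huX, hvX, hv1, hvu⟩ := two_big l.1
  rcases solve_last s2 with ⟨x₂, hx₂0, hx₂n, hΛ₁⟩ | ⟨x₂, hx₂0, hx₂n, hΛ₁⟩
  · exfalso
    rw [hΛ₁] at s1
    rcases s1 with ⟨x, hx1, hx2, heq⟩ | ⟨x, hx1, hx2, heq⟩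
    · have h2 : X \ {x + n} = Lo 0 \ {x₂} := (prod_eq_iff.mp heq).2.symm
      have : u = x + n ∨ v = x + n := by
        by_contra hc
        push_neg at hc
        have h3 := (Set.ext_iff.mp h2 u).mp ⟨huX, hc.1⟩
        exact absurd h3.1 (by simp [Lo]; omega)
      rcases this with hu | hv
      · have h3 := (Set.ext_iff.mp h2 v).mp
          ⟨hvX, by simp only [Set.mem_singleton_iff]; omega⟩
        exact absurd h3.1 (by simp [Lo]; omega)
      · have h3 := (Set.ext_iff.mp h2 u).mp
          ⟨huX, by simp only [Set.mem_singleton_iff]; omega⟩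
        exact absurd h3.1 (by simp [Lo]; omega)
    · have h2 : X ∪ {x} = Lo 0 \ {x₂} := (prod_eq_iff.mp heq).2.symm
      have h3 := (Set.ext_iff.mp h2 u).mp (Or.inl huX)
      exact absurd h3.1 (by simp [Lo]; omega)
  · rw [hΛ₁] at s1
    rcases s1 with ⟨x₁, hx1, hx2, heq⟩ | ⟨x₁, hx1, hx2, heq⟩
    swap
    · exfalso
      have h2 : X ∪ {x₁} = Lo 0 ∪ {x₂ + n} := (prod_eq_iff.mp heq).2.symm
      have hu' := (Set.ext_iff.mp h2 u).mp (Or.inl huX)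
      have hv' := (Set.ext_iff.mp h2 v).mp (Or.inl hvX)
      simp only [Set.mem_union, Set.mem_singleton_iff, mem_Lo] at hu' hv'
      omega
    · have h1 : Y ∪ {x₁} = Lo (-1) \ {x₂} := (prod_eq_iff.mp heq).1.symm
      have h2 : X \ {x₁ + n} = Lo 0 ∪ {x₂ + n} := (prod_eq_iff.mp heq).2.symm
      have hx₁m : x₁ ∈ Lo (-1) \ {x₂} := h1 ▸ (Or.inr rfl : x₁ ∈ Y ∪ {x₁})
      have hx₁0 : x₁ ≤ -1 := hx₁m.1
      have hx₁₂ : x₁ ≠ x₂ := hx₁m.2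
      have hx₁n : ¬ (x₁ + (n : ℤ) ∈ Lo 0 ∪ {x₂ + n}) := by
        intro hc
        have := (Set.ext_iff.mp h2 (x₁ + n)).mpr hc
        exact this.2 rfl
      simp only [Set.mem_union, Set.mem_singleton_iff, mem_Lo] at hx₁n
      push_neg at hx₁n
      have hXeq : X = Lo 0 ∪ {x₂ + n} ∪ {x₁ + n} := by
        ext z
        have e2 := Set.ext_iff.mp h2 z
        simp only [Set.mem_union, Set.mem_diff, Set.mem_singleton_iff, mem_Lo] at e2 ⊢
        constructor
        · intro hz
          by_cases hzx : z = x₁ + n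
          · exact Or.inr hzx
          · exact Or.inl (e2.mp ⟨hz, hzx⟩)
        · rintro (hz | rfl)
          · exact (e2.mpr hz).1
          · exact hx1
      have hYeq : Y = (Lo (-1) \ {x₂}) \ {x₁} := by
        ext z
        have e1 := Set.ext_iff.mp h1 z
        simp only [Set.mem_union, Set.mem_diff, Set.mem_singleton_iff, mem_Lo] at e1 ⊢
        constructor
        · intro hz
          have := e1.mp (Or.inl hz)
          refine ⟨this, ?_⟩
          rintro rfl
          exact hx2 hz
        · rintro ⟨⟨hz1, hz2⟩, hz3⟩
          rcases e1.mpr ⟨hz1, hz2⟩ with hz | hz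
          · exact hz
          · exact absurd hz hz3
      rcases le_or_gt x₂ x₁ with hc | hc
      · -- -x₁ ≤ -x₂ : i = (-x₁).toNat, j = (-x₂).toNat
        apply build_mem hn ((-x₁).toNat) ((-x₂).toNat) (by omega) (by omega) (by omega)
        · rw [← hXdef, hXeq]
          ext z
          simp only [Set.mem_union, Set.mem_insert_iff, Set.mem_singleton_iff, mem_Lo]
          omega
        · rw [← hYdef, hYeq]
          ext z
          simp only [Set.mem_diff, Set.mem_insert_iff, Set.mem_singleton_iff, mem_Lo]
          omega
      · apply build_mem hn ((-x₂).toNat) ((-x₁).toNat) (by omega) (by omega) (by omega)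
        · rw [← hXdef, hXeq]
          ext z
          simp only [Set.mem_union, Set.mem_insert_iff, Set.mem_singleton_iff, mem_Lo]
          omega
        · rw [← hYdef, hYeq]
          ext z
          simp only [Set.mem_diff, Set.mem_insert_iff, Set.mem_singleton_iff, mem_Lo]
          omega

end DN6
namespace DN6
open Set

lemma backward {n : ℕ} (hn : 3 ≤ n) {l : Bipartition} (hl : l ∈ LB6 n) :
    IsCocore n (symbolOf l (sigmaT 2)) trivialSymbol := by
  obtain ⟨i, j, h0, hij, hjn, rfl⟩ := hl
  constructor
  swap
  · exact fun C' => no_step_trivial (by omega) C'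
  · rw [symbolOf_two]
    have hX : Set.range (betaSet (bip {n - i - 2, n - j - 1}
        (Multiset.replicate (i - 1) 2 + Multiset.replicate (j - i - 1) 1)).1 2) =
        Lo 0 ∪ {(n : ℤ) - i, (n : ℤ) - j} := by
      show Set.range (betaSet (Partition'.ofMul {n - i - 2, n - j - 1}) 2) = _
      rw [range_beta_pair (n - i - 2) (n - j - 1) (by omega)]
      ext z
      simp only [Set.mem_union, Set.mem_insert_iff, Set.mem_singleton_iff, mem_Lo]
      omega
    have hY : Set.range (betaSet (bip {n - i - 2, n - j - 1}
        (Multiset.replicate (i - 1) 2 + Multiset.replicate (j - i - 1) 1)).2 (-3)) =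
        Lo (-1) \ {-(i : ℤ), -(j : ℤ)} := by
      show Set.range (betaSet (Partition'.ofMul
        (Multiset.replicate (i - 1) 2 + Multiset.replicate (j - i - 1) 1)) (-3)) = _
      rw [range_beta_rep (i - 1) (j - i - 1)]
      ext z
      simp only [Set.mem_diff, Set.mem_insert_iff, Set.mem_singleton_iff, mem_Lo]
      omega
    rw [hX, hY]
    have step1 : CohookStep n (Lo 0 ∪ {(n : ℤ) - i, (n : ℤ) - j}, Lo (-1) \ {-(i : ℤ), -(j : ℤ)})
        (Lo (-1) \ {-(j : ℤ)}, Lo 0 ∪ {(n : ℤ) - j}) := by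
      left
      refine ⟨-(i : ℤ), ?_, ?_, ?_⟩
      · show -(i : ℤ) + n ∈ Lo 0 ∪ {(n : ℤ) - i, (n : ℤ) - j}
        simp only [Set.mem_union, Set.mem_insert_iff, Set.mem_singleton_iff, mem_Lo]
        omega
      · show ¬ (-(i : ℤ) ∈ Lo (-1) \ {-(i : ℤ), -(j : ℤ)})
        simp only [Set.mem_diff, Set.mem_insert_iff, Set.mem_singleton_iff, mem_Lo]
        tauto
      · rw [prod_eq_iff]
        constructor
        · ext z
          simp only [Set.mem_union, Set.mem_diff, Set.mem_insert_iff, Set.mem_singleton_iff,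
            mem_Lo]
          omega
        · ext z
          simp only [Set.mem_union, Set.mem_diff, Set.mem_insert_iff, Set.mem_singleton_iff,
            mem_Lo]
          omega
    have step2 : CohookStep n (Lo (-1) \ {-(j : ℤ)}, Lo 0 ∪ {(n : ℤ) - j}) trivialSymbol := by
      right
      refine ⟨-(j : ℤ), ?_, ?_, ?_⟩
      · show -(j : ℤ) + n ∈ Lo 0 ∪ {(n : ℤ) - j}
        simp only [Set.mem_union, Set.mem_singleton_iff, mem_Lo]
        omega
      · show ¬ (-(j : ℤ) ∈ Lo (-1) \ {-(j : ℤ)})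
        simp only [Set.mem_diff, Set.mem_singleton_iff, mem_Lo]
        tauto
      · show trivialSymbol = ((Lo 0 ∪ {(n : ℤ) - j}) \ {-(j : ℤ) + n}, (Lo (-1) \ {-(j : ℤ)}) ∪ {-(j : ℤ)})
        have t1 : trivialSymbol = ((Lo 0 : Set ℤ), (Lo (-1) : Set ℤ)) := rfl
        rw [t1, prod_eq_iff]
        constructor
        · ext z
          simp only [Set.mem_union, Set.mem_diff, Set.mem_singleton_iff, mem_Lo]
          omega
        · ext z
          simp only [Set.mem_union, Set.mem_diff, Set.mem_singleton_iff, mem_Lo]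
          omega
    exact Relation.ReflTransGen.head step1 (Relation.ReflTransGen.head step2
      Relation.ReflTransGen.refl)

lemma size_LB6 {n : ℕ} (hn : 3 ≤ n) {l : Bipartition} (hl : l ∈ LB6 n) :
    l.size = 2 * n - 6 := by
  obtain ⟨i, j, h0, hij, hjn, rfl⟩ := hl
  show (Partition'.ofMul _).size + (Partition'.ofMul _).size = 2 * n - 6
  rw [size_ofMul, size_ofMul]
  have e1 : ({n - i - 2, n - j - 1} : Multiset ℕ).sum = (n - i - 2) + (n - j - 1) := by
    simp [Multiset.insert_eq_cons]
  have e2 : (Multiset.replicate (i - 1) 2 + Multiset.replicate (j - i - 1) 1).sum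
      = (i - 1) * 2 + (j - i - 1) * 1 := by
    rw [Multiset.sum_add, Multiset.sum_replicate, Multiset.sum_replicate]
    simp [Nat.smul_one_eq_cast]
  rw [e1, e2]
  omega

end DN6
namespace DN6
open Set

def Fmap (n : ℕ) : ℕ × ℕ → Bipartition := fun p =>
  bip {n - p.1 - 2, n - p.2 - 1}
    (Multiset.replicate (p.1 - 1) 2 + Multiset.replicate (p.2 - p.1 - 1) 1)

def Tf (n : ℕ) : Finset (ℕ × ℕ) :=
  ((Finset.range n) ×ˢ (Finset.range n)).filter (fun p => 0 < p.1 ∧ p.1 < p.2)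

lemma mem_Tf {n : ℕ} {p : ℕ × ℕ} : p ∈ Tf n ↔ 0 < p.1 ∧ p.1 < p.2 ∧ p.2 < n := by
  unfold Tf
  simp only [Finset.mem_filter, Finset.mem_product, Finset.mem_range]
  constructor
  · rintro ⟨⟨h1, h2⟩, h3, h4⟩; exact ⟨h3, h4, h2⟩
  · rintro ⟨h1, h2, h3⟩; exact ⟨⟨by omega, h3⟩, h1, h2⟩

lemma LB6_eq_image (n : ℕ) : LB6 n = Fmap n '' ↑(Tf n) := by
  ext l
  simp only [LB6, Set.mem_setOf_eq, Set.mem_image, Finset.mem_coe, mem_Tf]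
  constructor
  · rintro ⟨i, j, h1, h2, h3, h4⟩
    exact ⟨(i, j), ⟨h1, h2, h3⟩, h4.symm⟩
  · rintro ⟨⟨i, j⟩, ⟨h1, h2, h3⟩, h4⟩
    exact ⟨i, j, h1, h2, h3, h4.symm⟩

set_option maxHeartbeats 1600000 in
lemma Fmap_injOn (n : ℕ) : Set.InjOn (Fmap n) ↑(Tf n) := by
  rintro ⟨i, j⟩ hp ⟨i', j'⟩ hq hFeq
  rw [Finset.mem_coe, mem_Tf] at hp hq
  simp only [Fmap, bip] at hFeq
  have h2' : Partition'.ofMul (Multiset.replicate (i - 1) 2 + Multiset.replicate (j - i - 1) 1)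
      = Partition'.ofMul (Multiset.replicate (i' - 1) 2 + Multiset.replicate (j' - i' - 1) 1) :=
    congrArg Prod.snd hFeq
  have key : ∀ k, (if k < i - 1 then 2 else if k < (i - 1) + (j - i - 1) then 1 else 0 : ℕ)
      = (if k < i' - 1 then 2 else if k < (i' - 1) + (j' - i' - 1) then 1 else 0) := by
    intro k
    have h3 := congrFun (congrArg Partition'.parts h2') k
    rwa [parts_rep, parts_rep] at h3
  obtain ⟨hp1, hp2, hp3⟩ := hp
  obtain ⟨hq1, hq2, hq3⟩ := hq
  have k1 := key (i - 1)
  have k2 := key (i' - 1)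
  have k3 := key ((i - 1) + (j - i - 1))
  have k4 := key ((i' - 1) + (j' - i' - 1))
  simp only [Prod.mk.injEq]
  split_ifs at k1 k2 k3 k4 <;> omega

lemma gauss : ∀ m : ℕ, 2 * (∑ j ∈ Finset.range m, (j - 1)) = (m - 1) * (m - 2) := by
  intro m
  induction m with
  | zero => simp
  | succ m ih =>
    rw [Finset.sum_range_succ, Nat.mul_add, ih]
    rcases Nat.lt_or_ge m 2 with hm | hm
    · interval_cases m <;> simp
    · obtain ⟨k, rfl⟩ : ∃ k, m = k + 2 := ⟨m - 2, by omega⟩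
      have a1 : k + 2 - 1 = k + 1 := by omega
      have a2 : k + 2 - 2 = k := by omega
      have a3 : k + 2 + 1 - 1 = k + 2 := by omega
      have a4 : k + 2 + 1 - 2 = k + 1 := by omega
      rw [a1, a2, a3, a4]
      ring

lemma card_Tf (n : ℕ) : 2 * (Tf n).card = (n - 1) * (n - 2) := by
  have hbij : (Tf n).card = ((Finset.range n).sigma (fun j => Finset.Ioo 0 j)).card := by
    apply Finset.card_bij (fun (p : ℕ × ℕ) _ => (⟨p.2, p.1⟩ : Σ _ : ℕ, ℕ))
    · intro p hp
      rw [mem_Tf] at hp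
      simp only [Finset.mem_sigma, Finset.mem_range, Finset.mem_Ioo]
      omega
    · rintro ⟨i, j⟩ hp ⟨i', j'⟩ hq h
      have e1 : j = j' := congrArg Sigma.fst h
      subst e1
      have e2 : i = i' := by
        have := congrArg (fun x : Σ _ : ℕ, ℕ => x.2) h
        exact this
      subst e2
      rfl
    · rintro ⟨j, i⟩ hs
      simp only [Finset.mem_sigma, Finset.mem_range, Finset.mem_Ioo] at hs
      exact ⟨(i, j), by rw [mem_Tf]; omega, rfl⟩
  have hIoo : ∀ j : ℕ, (Finset.Ioo 0 j).card = j - 1 := by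
    intro j
    rw [Nat.card_Ioo]
    omega
  rw [hbij, Finset.card_sigma, Finset.sum_congr rfl (fun j _ => hIoo j)]
  exact gauss n

end DN6

/-- The bipartitions of `2n - 6` whose symbol of charge `σ₂ = (2,-3)`
has `n`-co-core the trivial symbol are exactly the members of `LB6 n`, and there are
exactly `(n-1)(n-2)/2` of them. -/
theorem decomposition_numbers_stmt6 (n : ℕ) (hn : 3 ≤ n) :
    (∀ l : Bipartition, Bipartition.size l = 2 * n - 6 →
        (IsCocore n (symbolOf l (sigmaT 2)) trivialSymbol ↔ l ∈ LB6 n)) ∧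
    {l : Bipartition | Bipartition.size l = 2 * n - 6 ∧
        IsCocore n (symbolOf l (sigmaT 2)) trivialSymbol}.Finite ∧
    {l : Bipartition | Bipartition.size l = 2 * n - 6 ∧
        IsCocore n (symbolOf l (sigmaT 2)) trivialSymbol}.ncard = (n - 1) * (n - 2) / 2 := by
  have hset : {l : Bipartition | Bipartition.size l = 2 * n - 6 ∧
      IsCocore n (symbolOf l (sigmaT 2)) trivialSymbol} = LB6 n := by
    ext l
    simp only [Set.mem_setOf_eq]
    constructor
    · rintro ⟨hs, hc⟩
      exact DN6.forward hn hs hc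
    · intro hl
      exact ⟨DN6.size_LB6 hn hl, DN6.backward hn hl⟩
  refine ⟨?_, ?_, ?_⟩
  · intro l hsize
    exact ⟨fun h => DN6.forward hn hsize h, fun hl => DN6.backward hn hl⟩
  · rw [hset, DN6.LB6_eq_image]
    exact Set.Finite.image _ (Finset.finite_toSet _)
  · rw [hset, DN6.LB6_eq_image, Set.ncard_image_of_injOn (DN6.Fmap_injOn n),
      Set.ncard_coe_finset]
    have := DN6.card_Tf n
    omega
end
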